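/- arXiv:1102.4820 — 2 statements merged into one kernel-verified Lean document; each statement's English description precedes it below -/
import Mathlib

section
/- (Harris–FKG inequality for product Bernoulli measures on a finite set) Let S be a finite set, P the product measure on {0,1}^S with P(ω(s)=1) = p for each s independently, and A, B increasing events. Then P(A ∩ B) ≥ P(A)·P(B). -/
def IncreasingEvent {S : Type*} (A : Set (S → Bool)) : Prop :=
  ∀ ω₁ ω₂ : S → Bool, (∀ s, ω₁ s ≤ ω₂ s) → ω₁ ∈ A → ω₂ ∈ A

/-- The Bernoulli(p) product weight of a configuration. -/
def bernoulliWeight {S : Type*} [Fintype S] (p : ℝ) (ω : S → Bool) : ℝ :=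
  ∏ s : S, if ω s then p else 1 - p

open Classical in
/-- The probability of an event under the Bernoulli(p) product measure on `{0,1}^S`. -/
noncomputable def bernoulliProb {S : Type*} [Fintype S] [DecidableEq S]
    (p : ℝ) (A : Set (S → Bool)) : ℝ :=
  ∑ ω : S → Bool, if ω ∈ A then bernoulliWeight p ω else 0

open Classical in
theorem harris_fkg {S : Type*} [Fintype S] [DecidableEq S]
    (p : ℝ) (hp0 : 0 ≤ p) (hp1 : p ≤ 1) (A B : Set (S → Bool))
    (hA : IncreasingEvent A) (hB : IncreasingEvent B) :
    bernoulliProb p (A ∩ B) ≥ bernoulliProb p A * bernoulliProb p B := by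
  classical
  let μ : (S → Bool) → ℝ := bernoulliWeight p
  let f : (S → Bool) → ℝ := fun ω => if ω ∈ A then 1 else 0
  let g : (S → Bool) → ℝ := fun ω => if ω ∈ B then 1 else 0
  have hμ0 : 0 ≤ μ := fun ω => Finset.prod_nonneg fun s _ => by
    dsimp only; split <;> linarith
  have hf0 : 0 ≤ f := fun ω => by
    show 0 ≤ if ω ∈ A then (1:ℝ) else 0
    split <;> norm_num
  have hg0 : 0 ≤ g := fun ω => by
    show 0 ≤ if ω ∈ B then (1:ℝ) else 0
    split <;> norm_num
  have hfm : Monotone f := by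
    intro a b hab
    show (if a ∈ A then (1:ℝ) else 0) ≤ if b ∈ A then (1:ℝ) else 0
    by_cases ha : a ∈ A
    · rw [if_pos ha, if_pos (hA a b (fun s => hab s) ha)]
    · rw [if_neg ha]; split <;> norm_num
  have hgm : Monotone g := by
    intro a b hab
    show (if a ∈ B then (1:ℝ) else 0) ≤ if b ∈ B then (1:ℝ) else 0
    by_cases ha : a ∈ B
    · rw [if_pos ha, if_pos (hB a b (fun s => hab s) ha)]
    · rw [if_neg ha]; split <;> norm_num
  have hμlog : ∀ a b : S → Bool, μ a * μ b ≤ μ (a ⊓ b) * μ (a ⊔ b) := by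
    intro a b
    show bernoulliWeight p a * bernoulliWeight p b ≤
      bernoulliWeight p (a ⊓ b) * bernoulliWeight p (a ⊔ b)
    unfold bernoulliWeight
    rw [← Finset.prod_mul_distrib, ← Finset.prod_mul_distrib]
    apply le_of_eq
    apply Finset.prod_congr rfl
    intro s _
    show _ = (if (a ⊓ b) s then p else 1 - p) * (if (a ⊔ b) s then p else 1 - p)
    have h1 : (a ⊓ b) s = (a s && b s) := rfl
    have h2 : (a ⊔ b) s = (a s || b s) := rfl
    rw [h1, h2]
    cases a s <;> cases b s <;> simp <;> ring
  have hsum : ∑ ω : S → Bool, μ ω = 1 := by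
    show ∑ ω : S → Bool, ∏ s : S, (if ω s then p else 1 - p) = 1
    have huniv : (Finset.univ : Finset (S → Bool)) =
        Fintype.piFinset fun _ : S => (Finset.univ : Finset Bool) := by
      ext ω; simp [Fintype.mem_piFinset]
    rw [huniv, Finset.sum_prod_piFinset Finset.univ (fun (_ : S) (b : Bool) => if b then p else 1 - p)]
    have : ∀ s : S, ∑ b : Bool, (if b then p else 1 - p) = 1 := by
      intro s; simp
    rw [Finset.prod_congr rfl fun s _ => this s]
    simp
  have key := fkg f g μ hμ0 hf0 hg0 hfm hgm hμlog
  rw [hsum, one_mul] at key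
  have e1 : bernoulliProb p A = ∑ ω : S → Bool, μ ω * f ω := by
    apply Finset.sum_congr rfl
    intro ω _
    show (if ω ∈ A then bernoulliWeight p ω else 0) = μ ω * (if ω ∈ A then 1 else 0)
    split <;> simp [μ]
  have e2 : bernoulliProb p B = ∑ ω : S → Bool, μ ω * g ω := by
    apply Finset.sum_congr rfl
    intro ω _
    show (if ω ∈ B then bernoulliWeight p ω else 0) = μ ω * (if ω ∈ B then 1 else 0)
    split <;> simp [μ]
  have e3 : bernoulliProb p (A ∩ B) = ∑ ω : S → Bool, μ ω * (f ω * g ω) := by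
    apply Finset.sum_congr rfl
    intro ω _
    by_cases hωA : ω ∈ A <;> by_cases hωB : ω ∈ B <;>
      simp [μ, f, g, hωA, hωB, Set.mem_inter_iff]
  rw [e1, e2, e3]
  exact key
end

section
/- (Russo's formula) Let S be a finite set, P_p the product Bernoulli(p) measure on Ω = {0,1}^S, and A ⊆ Ω an increasing event. A site s is pivotal for A in configuration ω if flipping the value ω(s) changes membership of ω in A. Then d/dp P_p(A) = Σ_{s∈S} P_p(s is pivotal for A) = E_p[N_A], where N_A is the number of pivotal sites. -/
/-- The event that site `s` is pivotal for `A`: flipping `ω s` changes membership in `A`. -/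
def pivotal {S : Type*} [DecidableEq S] (A : Set (S → Bool)) (s : S) : Set (S → Bool) :=
  {ω | ¬ ((ω ∈ A) ↔ (Function.update ω s (!ω s) ∈ A))}

open Classical Finset

set_option linter.unusedSectionVars false

section Aux
variable {S : Type*} [Fintype S] [DecidableEq S]

noncomputable def flipAt (s : S) (ω : S → Bool) : S → Bool := Function.update ω s (!ω s)

lemma flipAt_self (s : S) (ω : S → Bool) : flipAt s ω s = !ω s := by
  simp [flipAt]

lemma flipAt_ne (s t : S) (ω : S → Bool) (h : t ≠ s) : flipAt s ω t = ω t := by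
  simp [flipAt, Function.update_of_ne h]

lemma flipAt_invol (s : S) : Function.Involutive (flipAt s) := by
  intro ω
  funext t
  by_cases h : t = s
  · subst h; simp [flipAt]
  · simp [flipAt, Function.update_of_ne h]

lemma mem_pivotal_iff {A : Set (S → Bool)} {s : S} {ω : S → Bool} :
    ω ∈ pivotal A s ↔ ¬ (ω ∈ A ↔ flipAt s ω ∈ A) := Iff.rfl

lemma pivotal_flip {A : Set (S → Bool)} {s : S} {ω : S → Bool} :
    flipAt s ω ∈ pivotal A s ↔ ω ∈ pivotal A s := by
  rw [mem_pivotal_iff, mem_pivotal_iff, flipAt_invol s ω]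
  tauto

lemma prod_erase_flip (p : ℝ) (s : S) (ω : S → Bool) :
    (∏ t ∈ univ.erase s, (if flipAt s ω t then p else 1 - p)) =
      ∏ t ∈ univ.erase s, (if ω t then p else 1 - p) := by
  refine Finset.prod_congr rfl fun t ht => ?_
  rw [flipAt_ne s t ω (Finset.mem_erase.1 ht).1]

lemma weight_split (p : ℝ) (s : S) (ω : S → Bool) :
    bernoulliWeight p ω = (if ω s then p else 1 - p) *
      ∏ t ∈ univ.erase s, (if ω t then p else 1 - p) := by
  rw [bernoulliWeight, ← Finset.mul_prod_erase univ _ (Finset.mem_univ s)]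

/-- Key combinatorial identity for a fixed site. -/
lemma key_site (A : Set (S → Bool)) (hA : IncreasingEvent A) (p : ℝ) (s : S) :
    (∑ ω : S → Bool, if ω ∈ A then
        (∏ t ∈ univ.erase s, (if ω t then p else 1 - p)) * (if ω s then (1:ℝ) else -1) else 0)
      = bernoulliProb p (pivotal A s) := by
  set F : (S → Bool) → ℝ := fun ω => if ω ∈ A then
      (∏ t ∈ univ.erase s, (if ω t then p else 1 - p)) * (if ω s then (1:ℝ) else -1) else 0
    with hF
  set G : (S → Bool) → ℝ := fun ω => if ω ∈ pivotal A s then bernoulliWeight p ω else 0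
    with hG
  have hpair : ∀ ω : S → Bool, F ω + F (flipAt s ω) = G ω + G (flipAt s ω) := by
    intro ω
    have hP := prod_erase_flip p s ω
    have hfs := flipAt_self s ω
    have hpiv := (pivotal_flip (A := A) (s := s) (ω := ω))
    have hW : bernoulliWeight p ω + bernoulliWeight p (flipAt s ω)
        = ∏ t ∈ univ.erase s, (if ω t then p else 1 - p) := by
      rw [weight_split p s ω, weight_split p s (flipAt s ω), hP, hfs]
      cases h : ω s <;> (simp [h]; ring)
    simp only [hF, hG]
    by_cases hωs : ω s = true
    · have hle : ∀ t, flipAt s ω t ≤ ω t := by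
        intro t
        by_cases h : t = s
        · subst h; rw [hfs, hωs]; simp
        · rw [flipAt_ne s t ω h]
      have hmono : flipAt s ω ∈ A → ω ∈ A := hA _ _ hle
      by_cases h1 : ω ∈ A <;> by_cases h2 : flipAt s ω ∈ A
      · have hnp : ω ∉ pivotal A s := by rw [mem_pivotal_iff]; tauto
        have hnp' : flipAt s ω ∉ pivotal A s := fun h => hnp (hpiv.mp h)
        simp [h1, h2, hωs, hfs, hP, hnp, hnp']
      · have hp : ω ∈ pivotal A s := by rw [mem_pivotal_iff]; tauto
        have hp' : flipAt s ω ∈ pivotal A s := hpiv.mpr hp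
        simp only [if_pos h1, if_neg h2, if_pos hp, if_pos hp', hωs, if_true]
        rw [hW]; ring
      · exact absurd (hmono h2) h1
      · have hnp : ω ∉ pivotal A s := by rw [mem_pivotal_iff]; tauto
        have hnp' : flipAt s ω ∉ pivotal A s := fun h => hnp (hpiv.mp h)
        simp [h1, h2, hnp, hnp']
    · have hle : ∀ t, ω t ≤ flipAt s ω t := by
        intro t
        by_cases h : t = s
        · subst h; rw [hfs]; simp [Bool.eq_false_iff.mpr, Bool.not_eq_true] at hωs ⊢
          simp [hωs]
        · rw [flipAt_ne s t ω h]
      have hmono : ω ∈ A → flipAt s ω ∈ A := hA _ _ hle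
      by_cases h1 : ω ∈ A <;> by_cases h2 : flipAt s ω ∈ A
      · have hnp : ω ∉ pivotal A s := by rw [mem_pivotal_iff]; tauto
        have hnp' : flipAt s ω ∉ pivotal A s := fun h => hnp (hpiv.mp h)
        simp [h1, h2, hωs, hfs, hP, hnp, hnp']
      · exact absurd (hmono h1) h2
      · have hp : ω ∈ pivotal A s := by rw [mem_pivotal_iff]; tauto
        have hp' : flipAt s ω ∈ pivotal A s := hpiv.mpr hp
        simp only [if_neg h1, if_pos h2, if_pos hp, if_pos hp', hfs]
        simp only [Bool.not_eq_true] at hωs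
        simp only [hωs, Bool.not_false, if_true, hP]
        rw [hW]; ring
      · have hnp : ω ∉ pivotal A s := by rw [mem_pivotal_iff]; tauto
        have hnp' : flipAt s ω ∉ pivotal A s := fun h => hnp (hpiv.mp h)
        simp [h1, h2, hnp, hnp']
  have hFflip : ∑ ω : S → Bool, F (flipAt s ω) = ∑ ω : S → Bool, F ω :=
    Fintype.sum_bijective (flipAt s) (flipAt_invol s).bijective _ _ (fun ω => rfl)
  have hGflip : ∑ ω : S → Bool, G (flipAt s ω) = ∑ ω : S → Bool, G ω :=
    Fintype.sum_bijective (flipAt s) (flipAt_invol s).bijective _ _ (fun ω => rfl)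
  have hsum : ∑ ω : S → Bool, (F ω + F (flipAt s ω)) = ∑ ω : S → Bool, (G ω + G (flipAt s ω)) :=
    Finset.sum_congr rfl (fun ω _ => hpair ω)
  rw [Finset.sum_add_distrib, Finset.sum_add_distrib, hFflip, hGflip] at hsum
  have : ∑ ω : S → Bool, F ω = ∑ ω : S → Bool, G ω := by linarith
  rw [show (∑ ω : S → Bool, if ω ∈ A then
        (∏ t ∈ univ.erase s, (if ω t then p else 1 - p)) * (if ω s then (1:ℝ) else -1) else 0)
      = ∑ ω : S → Bool, F ω from rfl, this]
  rfl

lemma hasDerivAt_weight (ω : S → Bool) (p : ℝ) :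
    HasDerivAt (fun q => bernoulliWeight q ω)
      (∑ s : S, (∏ t ∈ univ.erase s, (if ω t then p else 1 - p)) * (if ω s then (1:ℝ) else -1))
      p := by
  have h : ∀ s ∈ univ, HasDerivAt (fun q : ℝ => if ω s then q else 1 - q)
      (if ω s then (1:ℝ) else -1) p := by
    intro s _
    by_cases h : ω s = true
    · simpa [h] using (hasDerivAt_id' (x := p))
    · simp only [h, if_false]
      simpa using (hasDerivAt_const p (1:ℝ)).fun_sub (hasDerivAt_id' (x := p))
  have := HasDerivAt.fun_finsetProd h
  simpa [bernoulliWeight, smul_eq_mul] using this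

end Aux

open Classical in
/-- Russo's formula: the derivative of `p ↦ P_p(A)` is the sum over sites of the
probability of being pivotal, which equals the expected number of pivotal sites. -/
theorem russo_formula {S : Type*} [Fintype S] [DecidableEq S]
    (A : Set (S → Bool)) (hA : IncreasingEvent A) (p : ℝ) :
    HasDerivAt (fun q => bernoulliProb q A) (∑ s : S, bernoulliProb p (pivotal A s)) p ∧
    ∑ s : S, bernoulliProb p (pivotal A s) =
      ∑ ω : S → Bool, bernoulliWeight p ω *
        ((Finset.univ.filter fun s : S => ω ∈ pivotal A s).card : ℝ) := by
  constructor
  · have hD : HasDerivAt (fun q => bernoulliProb q A)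
        (∑ ω : S → Bool, if ω ∈ A then
          (∑ s : S, (∏ t ∈ univ.erase s, (if ω t then p else 1 - p)) *
            (if ω s then (1:ℝ) else -1)) else 0) p := by
      have : ∀ ω ∈ (univ : Finset (S → Bool)),
          HasDerivAt (fun q => if ω ∈ A then bernoulliWeight q ω else 0)
            (if ω ∈ A then
              (∑ s : S, (∏ t ∈ univ.erase s, (if ω t then p else 1 - p)) *
                (if ω s then (1:ℝ) else -1)) else 0) p := by
        intro ω _
        by_cases h : ω ∈ A
        · simpa [h] using hasDerivAt_weight ω p
        · simpa [h] using hasDerivAt_const p (0:ℝ)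
      simpa [bernoulliProb] using HasDerivAt.fun_sum this
    have heq : (∑ ω : S → Bool, if ω ∈ A then
          (∑ s : S, (∏ t ∈ univ.erase s, (if ω t then p else 1 - p)) *
            (if ω s then (1:ℝ) else -1)) else 0)
        = ∑ s : S, bernoulliProb p (pivotal A s) := by
      have h1 : ∀ ω : S → Bool, (if ω ∈ A then
          (∑ s : S, (∏ t ∈ univ.erase s, (if ω t then p else 1 - p)) *
            (if ω s then (1:ℝ) else -1)) else 0)
          = ∑ s : S, (if ω ∈ A then
              (∏ t ∈ univ.erase s, (if ω t then p else 1 - p)) *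
                (if ω s then (1:ℝ) else -1) else 0) := by
        intro ω
        by_cases h : ω ∈ A <;> simp [h]
      rw [Finset.sum_congr rfl (fun ω _ => h1 ω), Finset.sum_comm]
      exact Finset.sum_congr rfl (fun s _ => key_site A hA p s)
    rw [← heq]
    exact hD
  · have h1 : ∀ s : S, bernoulliProb p (pivotal A s)
        = ∑ ω : S → Bool, (if ω ∈ pivotal A s then bernoulliWeight p ω else 0) := fun s => rfl
    rw [Finset.sum_congr rfl (fun s _ => h1 s), Finset.sum_comm]
    refine Finset.sum_congr rfl (fun ω _ => ?_)
    rw [← Finset.sum_filter, Finset.sum_const, nsmul_eq_mul, mul_comm]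
end
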